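/- Let S be a finite set, μ a probability measure on S, and k ≤ n natural numbers with k ≥ 1. Let x_1,…,x_n ∈ S be given, and for z ∈ S write n_z = #{i ∈ {1,…,n} : x_i = z}. Then there exists a coupling of a random vector (o_1,…,o_k) of k independent uniform random elements of {1,…,n} with a random vector (y_1,…,y_k) of k independent S-valued random variables each with law μ, such that with probability at least 1 − k·(k/n + Σ_{z ∈ S} |n_z/n − μ(z)|), the indices o_1,…,o_k are pairwise distinct and x_{o_i} = y_i for every i = 1,…,k. -/

import Mathlib

open MeasureTheory ProbabilityTheory
open scoped ENNReal

set_option linter.unusedSectionVars false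

section Aux

variable {ι : Type} [Fintype ι] {β : ι → Type*} [∀ i, MeasurableSpace (β i)]
  (γ : ∀ i, Measure (β i)) [∀ i, IsProbabilityMeasure (γ i)]

lemma my_pi_eval_preimage (i : ι) (B : Set (β i)) :
    Measure.pi γ ((fun ω => ω i) ⁻¹' B) = γ i B := by
  classical
  have h : (fun ω : ∀ j, β j => ω i) ⁻¹' B =
      Set.pi Set.univ (Function.update (fun j => (Set.univ : Set (β j))) i B) :=
    Set.eval_preimage
  rw [h, Measure.pi_pi]
  rw [Finset.prod_eq_single i (fun j _ hj => by simp [Function.update_of_ne hj]) (by simp)]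
  simp

lemma my_iIndepFun_pi_eval :
    iIndepFun (fun (i : ι) (ω : ∀ j, β j) => ω i) (Measure.pi γ) := by
  classical
  rw [iIndepFun_iff_measure_inter_preimage_eq_mul]
  intro St sets hsets
  have h1 : (⋂ i ∈ St, (fun ω : ∀ j, β j => ω i) ⁻¹' sets i) =
      Set.pi Set.univ (fun j => if j ∈ St then sets j else Set.univ) := by
    ext ω
    simp only [Set.mem_iInter, Set.mem_preimage, Set.mem_pi, Set.mem_univ, true_implies]
    constructor
    · intro h j
      by_cases hj : j ∈ St <;> simp [hj, h]
    · intro h i hi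
      simpa [hi] using h i
  rw [h1, Measure.pi_pi]
  rw [← Finset.prod_subset (Finset.subset_univ St) (fun j _ hj => by simp [hj])]
  refine Finset.prod_congr rfl fun j hj => ?_
  rw [if_pos hj, my_pi_eval_preimage]

end Aux

namespace CplAux

variable {S : Type} [Fintype S] [DecidableEq S] [MeasurableSpace S] [MeasurableSingletonClass S]
  (μ : Measure S) (n : ℕ) (x : Fin n → S)

noncomputable def cnt (z : S) : ℕ := (Finset.univ.filter fun i : Fin n => x i = z).card

noncomputable def mz (z : S) : ℝ := (μ {z}).toReal

noncomputable def dd (i : Fin n) : ℝ := min ((1:ℝ)/n) (mz μ (x i) / (cnt n x (x i) : ℝ))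

noncomputable def az (z : S) : ℝ := min ((cnt n x z : ℝ)/n) (mz μ z)

noncomputable def rr (i : Fin n) : ℝ := 1/n - dd μ n x i

noncomputable def sz (z : S) : ℝ := mz μ z - az μ n x z

noncomputable def TT : ℝ := ∑ z : S, sz μ n x z

noncomputable def ww (p : Fin n × S) : ℝ :=
  (if p.2 = x p.1 then dd μ n x p.1 else 0) + rr μ n x p.1 * sz μ n x p.2 / TT μ n x

variable [IsProbabilityMeasure μ]

lemma mz_nonneg (z : S) : 0 ≤ mz μ z := ENNReal.toReal_nonneg

lemma mz_sum : ∑ z : S, mz μ z = 1 := by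
  simp only [mz]
  rw [← ENNReal.toReal_sum (fun z _ => measure_ne_top μ _)]
  have h : ∑ z : S, μ {z} = μ Set.univ := by
    rw [show (Set.univ : Set S) = ⋃ z ∈ (Finset.univ : Finset S), {z} by ext z; simp]
    rw [measure_biUnion_finset]
    · intro a _ b _ hab
      simp [Function.onFun, Set.disjoint_singleton, hab]
    · exact fun b _ => measurableSet_singleton b
  rw [h, measure_univ, ENNReal.toReal_one]

variable (hn : 0 < n)
include hn

lemma cnt_sum : ∑ z : S, ((cnt n x z : ℝ)/n) = 1 := by
  have h : ∑ z : S, (cnt n x z : ℝ) = n := by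
    have := Finset.card_eq_sum_card_fiberwise
      (f := x) (s := Finset.univ) (t := Finset.univ) (fun i _ => Finset.mem_univ _)
    have h2 : (n : ℝ) = ((Finset.univ : Finset (Fin n)).card : ℝ) := by simp
    rw [h2, this]
    push_cast
    rfl
  rw [← Finset.sum_div, h, div_self (by positivity)]

lemma dd_nonneg (i : Fin n) : 0 ≤ dd μ n x i :=
  le_min (by positivity) (div_nonneg (mz_nonneg μ _) (Nat.cast_nonneg _))

lemma dd_le (i : Fin n) : dd μ n x i ≤ 1/n := min_le_left _ _

lemma az_nonneg (z : S) : 0 ≤ az μ n x z :=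
  le_min (by positivity) (mz_nonneg μ _)

lemma az_le (z : S) : az μ n x z ≤ mz μ z := min_le_right _ _

lemma rr_nonneg (i : Fin n) : 0 ≤ rr μ n x i := sub_nonneg.2 (dd_le μ n x hn i)

lemma sz_nonneg (z : S) : 0 ≤ sz μ n x z := sub_nonneg.2 (az_le μ n x hn z)

lemma TT_nonneg : 0 ≤ TT μ n x :=
  Finset.sum_nonneg fun z _ => sz_nonneg μ n x hn z

lemma dd_fiber_sum (z : S) :
    ∑ i ∈ Finset.univ.filter (fun i : Fin n => x i = z), dd μ n x i = az μ n x z := by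
  have hn' : (0:ℝ) < n := by exact_mod_cast hn
  by_cases hz : cnt n x z = 0
  · have he : Finset.univ.filter (fun i : Fin n => x i = z) = ∅ :=
      Finset.card_eq_zero.1 hz
    rw [he, Finset.sum_empty]
    have h0 : ((cnt n x z : ℝ)/n) = 0 := by rw [hz]; simp
    rw [az, h0, min_eq_left (mz_nonneg μ z)]
  · have hcz : (0:ℝ) < (cnt n x z : ℝ) := by positivity
    have hstep : ∀ i ∈ Finset.univ.filter (fun i : Fin n => x i = z),
        dd μ n x i = min ((1:ℝ)/n) (mz μ z / (cnt n x z : ℝ)) := by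
      intro i hi
      rw [Finset.mem_filter] at hi
      rw [dd, hi.2]
    rw [Finset.sum_congr rfl hstep, Finset.sum_const]
    show (cnt n x z : ℕ) • _ = _
    rw [nsmul_eq_mul]
    rcases le_total ((1:ℝ)/n) (mz μ z / (cnt n x z : ℝ)) with h | h
    · rw [min_eq_left h, az, min_eq_left]
      · ring
      · calc (cnt n x z : ℝ)/n = (cnt n x z : ℝ) * (1/n) := by ring
          _ ≤ (cnt n x z : ℝ) * (mz μ z / (cnt n x z : ℝ)) :=
              mul_le_mul_of_nonneg_left h (le_of_lt hcz)
          _ = mz μ z := by field_simp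
    · rw [min_eq_right h, az, min_eq_right]
      · field_simp
      · calc mz μ z = (cnt n x z : ℝ) * (mz μ z / (cnt n x z : ℝ)) := by field_simp
          _ ≤ (cnt n x z : ℝ) * (1/n) := mul_le_mul_of_nonneg_left h (le_of_lt hcz)
          _ = (cnt n x z : ℝ)/n := by ring

lemma dd_sum : ∑ i : Fin n, dd μ n x i = ∑ z : S, az μ n x z := by
  rw [← Finset.sum_fiberwise_of_maps_to (g := x) (t := Finset.univ)
    (fun i _ => Finset.mem_univ _) (dd μ n x)]
  exact Finset.sum_congr rfl fun z _ => dd_fiber_sum μ n x hn z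

lemma az_sum : ∑ z : S, az μ n x z = 1 - TT μ n x := by
  have h : TT μ n x = ∑ z : S, (mz μ z - az μ n x z) := rfl
  rw [Finset.sum_sub_distrib, mz_sum] at h
  linarith

lemma rr_sum : ∑ i : Fin n, rr μ n x i = TT μ n x := by
  have hn' : (0:ℝ) < n := by exact_mod_cast hn
  have h : ∑ i : Fin n, rr μ n x i = ∑ _i : Fin n, ((1:ℝ)/n) - ∑ i, dd μ n x i :=
    Finset.sum_sub_distrib _ _
  rw [h, Finset.sum_const, Finset.card_univ, Fintype.card_fin, nsmul_eq_mul,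
    mul_one_div, div_self hn'.ne', dd_sum μ n x hn, az_sum μ n x hn]
  ring

lemma rr_eq_zero (hT : TT μ n x = 0) (i : Fin n) : rr μ n x i = 0 :=
  (Finset.sum_eq_zero_iff_of_nonneg (fun j _ => rr_nonneg μ n x hn j)).1
    ((rr_sum μ n x hn).trans hT) i (Finset.mem_univ i)

lemma sz_eq_zero (hT : TT μ n x = 0) (z : S) : sz μ n x z = 0 :=
  (Finset.sum_eq_zero_iff_of_nonneg (fun w _ => sz_nonneg μ n x hn w)).1 hT z
    (Finset.mem_univ z)

lemma ww_nonneg (p : Fin n × S) : 0 ≤ ww μ n x p := by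
  simp only [ww]
  refine add_nonneg ?_ (div_nonneg (mul_nonneg (rr_nonneg μ n x hn _)
    (sz_nonneg μ n x hn _)) (TT_nonneg μ n x hn))
  split
  exacts [dd_nonneg μ n x hn _, le_rfl]

lemma ww_row (i : Fin n) : ∑ z : S, ww μ n x (i, z) = 1/n := by
  simp only [ww]
  rw [Finset.sum_add_distrib]
  have h1 : ∑ z : S, (if z = x i then dd μ n x i else 0) = dd μ n x i := by
    rw [Finset.sum_ite_eq' Finset.univ (x i) (fun _ => dd μ n x i)]
    simp
  rw [h1]
  by_cases hT : TT μ n x = 0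
  · have hr := rr_eq_zero μ n x hn hT i
    have hd : dd μ n x i = 1/n := by
      have := hr
      unfold rr at this
      linarith
    simp [hr, hd]
  · have h2 : ∑ z : S, rr μ n x i * sz μ n x z / TT μ n x = rr μ n x i := by
      calc ∑ z : S, rr μ n x i * sz μ n x z / TT μ n x
          = (rr μ n x i / TT μ n x) * ∑ z : S, sz μ n x z := by
            rw [Finset.mul_sum]
            exact Finset.sum_congr rfl fun z _ => by ring
        _ = rr μ n x i := by
            rw [show ∑ z : S, sz μ n x z = TT μ n x from rfl]
            field_simp
    rw [h2]
    unfold rr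
    ring

end CplAux

namespace CplAux2

end CplAux2

namespace CplAux

variable {S : Type} [Fintype S] [DecidableEq S] [MeasurableSpace S] [MeasurableSingletonClass S]
  (μ : Measure S) (n : ℕ) (x : Fin n → S) [IsProbabilityMeasure μ] (hn : 0 < n)
include hn

lemma ww_col (z : S) : ∑ i : Fin n, ww μ n x (i, z) = mz μ z := by
  simp only [ww]
  rw [Finset.sum_add_distrib]
  have e : ∀ i : Fin n, (if z = x i then dd μ n x i else 0)
      = (if x i = z then dd μ n x i else 0) := fun i => if_congr eq_comm rfl rfl
  have h1 : ∑ i : Fin n, (if z = x i then dd μ n x i else 0) = az μ n x z := by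
    rw [Finset.sum_congr rfl fun i _ => e i, ← Finset.sum_filter]
    exact dd_fiber_sum μ n x hn z
  rw [h1]
  by_cases hT : TT μ n x = 0
  · have hs := sz_eq_zero μ n x hn hT z
    have ha : az μ n x z = mz μ z := by unfold sz at hs; linarith
    simp [hs, ha]
  · have h2 : ∑ i : Fin n, rr μ n x i * sz μ n x z / TT μ n x = sz μ n x z := by
      calc ∑ i : Fin n, rr μ n x i * sz μ n x z / TT μ n x
          = (∑ i : Fin n, rr μ n x i) * sz μ n x z / TT μ n x := by
            rw [Finset.sum_mul, Finset.sum_div]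
        _ = sz μ n x z := by
            rw [rr_sum μ n x hn]
            field_simp
    rw [h2]
    unfold sz
    ring

lemma ww_total : ∑ p : Fin n × S, ww μ n x p = 1 := by
  have hn' : (0:ℝ) < n := by exact_mod_cast hn
  rw [Fintype.sum_prod_type]
  rw [Finset.sum_congr rfl fun i _ => ww_row μ n x hn i]
  rw [Finset.sum_const, Finset.card_univ, Fintype.card_fin, nsmul_eq_mul, mul_one_div,
    div_self hn'.ne']

lemma TT_le : TT μ n x ≤ ∑ z : S, |(cnt n x z : ℝ)/n - mz μ z| := by
  refine Finset.sum_le_sum fun z _ => ?_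
  rcases le_total (mz μ z) ((cnt n x z : ℝ)/n) with h | h
  · have : sz μ n x z = 0 := by unfold sz az; rw [min_eq_right h]; ring
    rw [this]
    exact abs_nonneg _
  · have : sz μ n x z = mz μ z - (cnt n x z : ℝ)/n := by
      unfold sz az; rw [min_eq_left h]
    rw [this, abs_sub_comm]
    exact le_abs_self _

lemma ww_diag_ge (i : Fin n) : dd μ n x i ≤ ww μ n x (i, x i) := by
  have h : ww μ n x (i, x i) = dd μ n x i + rr μ n x i * sz μ n x (x i) / TT μ n x := by
    simp [ww]
  have := div_nonneg (mul_nonneg (rr_nonneg μ n x hn i) (sz_nonneg μ n x hn (x i)))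
    (TT_nonneg μ n x hn)
  linarith

lemma ww_offdiag : ∑ p : Fin n × S, (if p.2 = x p.1 then 0 else ww μ n x p) ≤ TT μ n x := by
  rw [Fintype.sum_prod_type]
  have key : ∀ i : Fin n,
      ∑ z : S, (if z = x i then 0 else ww μ n x (i, z)) ≤ rr μ n x i := by
    intro i
    have hsplit : ∑ z : S, ww μ n x (i, z)
        = ∑ z : S, ((if z = x i then ww μ n x (i, z) else 0)
          + (if z = x i then 0 else ww μ n x (i, z))) := by
      refine Finset.sum_congr rfl fun z _ => ?_
      by_cases h : z = x i <;> simp [h]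
    rw [Finset.sum_add_distrib] at hsplit
    have hdiag : ∑ z : S, (if z = x i then ww μ n x (i, z) else 0) = ww μ n x (i, x i) := by
      rw [Finset.sum_ite_eq' Finset.univ (x i) (fun z => ww μ n x (i, z))]
      simp
    have hrow := ww_row μ n x hn i
    have hge := ww_diag_ge μ n x hn i
    rw [hrow, hdiag] at hsplit
    unfold rr
    linarith
  calc ∑ i : Fin n, ∑ z : S, (if z = x i then 0 else ww μ n x (i, z))
      ≤ ∑ i : Fin n, rr μ n x i := Finset.sum_le_sum fun i _ => key i
    _ = TT μ n x := rr_sum μ n x hn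

end CplAux

namespace CplAux

variable {S : Type} [Fintype S] [DecidableEq S] [MeasurableSpace S] [MeasurableSingletonClass S]
  (μ : Measure S) (n : ℕ) (x : Fin n → S)

noncomputable def gam : Measure (Fin n × S) :=
  ∑ p : Fin n × S, (ENNReal.ofReal (ww μ n x p)) • Measure.dirac p

lemma gam_apply (A : Set (Fin n × S)) :
    gam μ n x A = ∑ p : Fin n × S, A.indicator (fun q => ENNReal.ofReal (ww μ n x q)) p := by
  rw [gam, Measure.finset_sum_apply]
  refine Finset.sum_congr rfl fun p _ => ?_
  rw [Measure.smul_apply, Measure.dirac_apply, smul_eq_mul]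
  by_cases hp : p ∈ A <;> simp [Set.indicator, hp]

variable [IsProbabilityMeasure μ] (hn : 0 < n)
include hn

lemma gam_univ : gam μ n x Set.univ = 1 := by
  rw [gam_apply]
  simp only [Set.indicator_univ]
  rw [← ENNReal.ofReal_sum_of_nonneg (fun p _ => ww_nonneg μ n x hn p),
    ww_total μ n x hn, ENNReal.ofReal_one]

lemma gam_fst (v : Fin n) : gam μ n x (Prod.fst ⁻¹' {v}) = (n : ℝ≥0∞)⁻¹ := by
  have hn' : (0:ℝ) < n := by exact_mod_cast hn
  rw [gam_apply, Fintype.sum_prod_type]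
  have h1 : ∀ i : Fin n, ∑ z : S,
      (Prod.fst ⁻¹' {v} : Set (Fin n × S)).indicator
        (fun q => ENNReal.ofReal (ww μ n x q)) (i, z)
      = if i = v then ∑ z : S, ENNReal.ofReal (ww μ n x (i, z)) else 0 := by
    intro i
    by_cases hi : i = v
    · subst hi
      simp [Set.indicator]
    · simp [Set.indicator, hi]
  rw [Finset.sum_congr rfl fun i _ => h1 i,
    Finset.sum_ite_eq' Finset.univ v (fun i => ∑ z : S, ENNReal.ofReal (ww μ n x (i, z)))]
  simp only [Finset.mem_univ, if_true]
  rw [← ENNReal.ofReal_sum_of_nonneg (fun z _ => ww_nonneg μ n x hn _), ww_row μ n x hn,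
    ENNReal.ofReal_div_of_pos hn', ENNReal.ofReal_one, ENNReal.ofReal_natCast, one_div]

lemma gam_snd (z : S) : gam μ n x (Prod.snd ⁻¹' {z}) = μ {z} := by
  rw [gam_apply, Fintype.sum_prod_type]
  have h1 : ∀ i : Fin n, ∀ w : S,
      (Prod.snd ⁻¹' {z} : Set (Fin n × S)).indicator
        (fun q => ENNReal.ofReal (ww μ n x q)) (i, w)
      = if w = z then ENNReal.ofReal (ww μ n x (i, w)) else 0 := by
    intro i w
    by_cases hw : w = z
    · subst hw; simp [Set.indicator]
    · simp [Set.indicator, hw]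
  calc ∑ i : Fin n, ∑ w : S,
        (Prod.snd ⁻¹' {z} : Set (Fin n × S)).indicator
          (fun q => ENNReal.ofReal (ww μ n x q)) (i, w)
      = ∑ i : Fin n, ENNReal.ofReal (ww μ n x (i, z)) := by
        refine Finset.sum_congr rfl fun i _ => ?_
        rw [Finset.sum_congr rfl fun w _ => h1 i w,
          Finset.sum_ite_eq' Finset.univ z (fun w => ENNReal.ofReal (ww μ n x (i, w)))]
        simp
    _ = μ {z} := by
        rw [← ENNReal.ofReal_sum_of_nonneg (fun i _ => ww_nonneg μ n x hn _),
          ww_col μ n x hn, mz, ENNReal.ofReal_toReal (measure_ne_top μ _)]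

lemma gam_bad :
    gam μ n x {p : Fin n × S | x p.1 ≠ p.2} ≤ ENNReal.ofReal (TT μ n x) := by
  rw [gam_apply]
  have h1 : ∀ p : Fin n × S,
      ({p : Fin n × S | x p.1 ≠ p.2}).indicator (fun q => ENNReal.ofReal (ww μ n x q)) p
      = ENNReal.ofReal (if p.2 = x p.1 then 0 else ww μ n x p) := by
    intro p
    by_cases hp : p.2 = x p.1
    · have hmem : p ∉ {p : Fin n × S | x p.1 ≠ p.2} := fun hh => hh hp.symm
      rw [Set.indicator_of_notMem hmem, if_pos hp, ENNReal.ofReal_zero]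
    · have hmem : p ∈ {p : Fin n × S | x p.1 ≠ p.2} := fun hh => hp hh.symm
      rw [Set.indicator_of_mem hmem, if_neg hp]
  rw [Finset.sum_congr rfl fun p _ => h1 p,
    ← ENNReal.ofReal_sum_of_nonneg (fun p _ => by
      split
      · exact le_rfl
      · exact ww_nonneg μ n x hn p)]
  exact ENNReal.ofReal_le_ofReal (ww_offdiag μ n x hn)

end CplAux


open CplAux in
/-- Let `S` be a finite set, `μ` a probability measure on `S`, and
`1 ≤ k ≤ n`.  Given types `x 1, …, x n ∈ S`, write `n_z` for the number of `i` with
`x i = z`.  Then there is a coupling of a vector of `k` independent uniform random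
elements `O 1, …, O k` of `{1,…,n}` with a vector of `k` i.i.d. `S`-valued random
variables `Y 1, …, Y k` of law `μ`, such that with probability at least
`1 − k·(k/n + Σ_z |n_z/n − μ(z)|)` the indices `O 1, …, O k` are pairwise distinct and
`x (O i) = Y i` for every `i`. -/
theorem coupling_uniform_roots_with_iid_types
    {S : Type} [Fintype S] [DecidableEq S] [MeasurableSpace S] [MeasurableSingletonClass S]
    (μ : Measure S) [IsProbabilityMeasure μ]
    (k n : ℕ) (hk : 1 ≤ k) (hkn : k ≤ n)
    (x : Fin n → S) :
    ∃ (Ω : Type) (_ : MeasurableSpace Ω) (P : Measure Ω) (_ : IsProbabilityMeasure P)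
      (O : Ω → Fin k → Fin n) (Y : Ω → Fin k → S),
      -- `O 1, …, O k` are independent and each uniformly distributed on `Fin n`
      (∀ i : Fin k, Measurable fun ω => O ω i) ∧
      iIndepFun (fun i ω => O ω i) P ∧
      (∀ (i : Fin k) (v : Fin n), P.map (fun ω => O ω i) {v} = ((n : ℝ≥0∞))⁻¹) ∧
      -- `Y 1, …, Y k` are independent, each with law `μ`
      (∀ i : Fin k, Measurable fun ω => Y ω i) ∧
      iIndepFun (fun i ω => Y ω i) P ∧
      (∀ i : Fin k, P.map (fun ω => Y ω i) = μ) ∧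
      -- the coupling succeeds with the claimed probability
      (1 - (k : ℝ) * ((k : ℝ) / n +
          ∑ z : S, |((Finset.univ.filter fun i : Fin n => x i = z).card : ℝ) / n -
            (μ {z}).toReal|) ≤
        (P {ω | Function.Injective (O ω) ∧ ∀ i : Fin k, x (O ω i) = Y ω i}).toReal) := by
  classical
  have hn : 0 < n := lt_of_lt_of_le hk hkn
  have hn' : (0:ℝ) < n := by exact_mod_cast hn
  haveI hγprob : IsProbabilityMeasure (gam μ n x) := ⟨gam_univ μ n x hn⟩
  refine ⟨Fin k → Fin n × S, inferInstance, Measure.pi (fun _ : Fin k => gam μ n x),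
    inferInstance, fun ω i => (ω i).1, fun ω i => (ω i).2, ?_, ?_, ?_, ?_, ?_, ?_, ?_⟩
  case _ => exact fun i => measurable_fst.comp (measurable_pi_apply i)
  case _ =>
    exact (my_iIndepFun_pi_eval (fun _ : Fin k => gam μ n x)).comp
      (fun _ => Prod.fst) (fun _ => measurable_fst)
  case _ =>
    intro i v
    show (Measure.pi fun _ : Fin k => gam μ n x).map
      (fun ω : Fin k → Fin n × S => (ω i).1) {v} = (↑n)⁻¹
    have hmO : Measurable fun ω : Fin k → Fin n × S => (ω i).1 :=
      measurable_fst.comp (measurable_pi_apply i)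
    rw [Measure.map_apply hmO (measurableSet_singleton v)]
    have h : ((fun ω : Fin k → Fin n × S => (ω i).1) ⁻¹' {v})
        = (fun ω : Fin k → Fin n × S => ω i) ⁻¹' (Prod.fst ⁻¹' {v}) := rfl
    rw [h, my_pi_eval_preimage, gam_fst μ n x hn]
  case _ => exact fun i => measurable_snd.comp (measurable_pi_apply i)
  case _ =>
    exact (my_iIndepFun_pi_eval (fun _ : Fin k => gam μ n x)).comp
      (fun _ => Prod.snd) (fun _ => measurable_snd)
  case _ =>
    intro i
    refine Measure.ext_of_singleton fun z => ?_
    show (Measure.pi fun _ : Fin k => gam μ n x).map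
      (fun ω : Fin k → Fin n × S => (ω i).2) {z} = μ {z}
    have hmY : Measurable fun ω : Fin k → Fin n × S => (ω i).2 :=
      measurable_snd.comp (measurable_pi_apply i)
    rw [Measure.map_apply hmY (measurableSet_singleton z)]
    have h : ((fun ω : Fin k → Fin n × S => (ω i).2) ⁻¹' {z})
        = (fun ω : Fin k → Fin n × S => ω i) ⁻¹' (Prod.snd ⁻¹' {z}) := rfl
    rw [h, my_pi_eval_preimage, gam_snd μ n x hn]
  case _ =>
    haveI hsc : MeasurableSingletonClass (Fin k → Fin n × S) := ⟨fun ω₀ => by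
      have h : ({ω₀} : Set (Fin k → Fin n × S)) = ⋂ i : Fin k, (fun ω => ω i) ⁻¹' {ω₀ i} := by
        ext ω
        simp [funext_iff]
      rw [h]
      exact MeasurableSet.iInter fun i => measurable_pi_apply i (measurableSet_singleton _)⟩
    have measAll : ∀ A : Set (Fin k → Fin n × S), MeasurableSet A :=
      fun A => A.toFinite.measurableSet
    set P := Measure.pi (fun _ : Fin k => gam μ n x) with hP
    haveI hPprob : IsProbabilityMeasure P := by rw [hP]; infer_instance
    set Sabs := ∑ z : S, |((Finset.univ.filter fun i : Fin n => x i = z).card : ℝ) / n -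
      (μ {z}).toReal| with hSabs
    have hSabs0 : 0 ≤ Sabs := Finset.sum_nonneg fun z _ => abs_nonneg _
    have hTle : TT μ n x ≤ Sabs := TT_le μ n x hn
    have hT0 : 0 ≤ TT μ n x := TT_nonneg μ n x hn
    have hOfst : ∀ (i : Fin k) (v : Fin n),
        P ((fun ω : Fin k → Fin n × S => (ω i).1) ⁻¹' {v}) = (n : ℝ≥0∞)⁻¹ := by
      intro i v
      have h : ((fun ω : Fin k → Fin n × S => (ω i).1) ⁻¹' {v})
          = (fun ω : Fin k → Fin n × S => ω i) ⁻¹' (Prod.fst ⁻¹' {v}) := rfl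
      rw [hP, h, my_pi_eval_preimage, gam_fst μ n x hn]
    have hOind : iIndepFun
        (fun (i : Fin k) (ω : Fin k → Fin n × S) => (ω i).1) P :=
      (my_iIndepFun_pi_eval (fun _ : Fin k => gam μ n x)).comp
        (fun _ => Prod.fst) (fun _ => measurable_fst)
    have hpair : ∀ pr : Fin k × Fin k, pr.1 ≠ pr.2 →
        P {ω : Fin k → Fin n × S | (ω pr.1).1 = (ω pr.2).1} ≤ (n : ℝ≥0∞)⁻¹ := by
      intro pr hij
      have hset : {ω : Fin k → Fin n × S | (ω pr.1).1 = (ω pr.2).1} =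
          ⋃ v : Fin n, ((fun ω : Fin k → Fin n × S => (ω pr.1).1) ⁻¹' {v})
            ∩ ((fun ω : Fin k → Fin n × S => (ω pr.2).1) ⁻¹' {v}) := by
        ext ω
        simp only [Set.mem_setOf_eq, Set.mem_iUnion, Set.mem_inter_iff, Set.mem_preimage,
          Set.mem_singleton_iff]
        constructor
        · intro h; exact ⟨(ω pr.2).1, h, rfl⟩
        · rintro ⟨v, h1, h2⟩; rw [h1, h2]
      have hIF : IndepFun (fun ω : Fin k → Fin n × S => (ω pr.1).1)
          (fun ω : Fin k → Fin n × S => (ω pr.2).1) P := hOind.indepFun hij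
      have heach : ∀ v : Fin n,
          P (((fun ω : Fin k → Fin n × S => (ω pr.1).1) ⁻¹' {v})
            ∩ ((fun ω : Fin k → Fin n × S => (ω pr.2).1) ⁻¹' {v}))
          = (n : ℝ≥0∞)⁻¹ * (n : ℝ≥0∞)⁻¹ := by
        intro v
        rw [hIF.measure_inter_preimage_eq_mul _ _ (measurableSet_singleton v)
          (measurableSet_singleton v), hOfst pr.1 v, hOfst pr.2 v]
      calc P {ω : Fin k → Fin n × S | (ω pr.1).1 = (ω pr.2).1}
          ≤ ∑' v : Fin n, P (((fun ω : Fin k → Fin n × S => (ω pr.1).1) ⁻¹' {v})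
              ∩ ((fun ω : Fin k → Fin n × S => (ω pr.2).1) ⁻¹' {v})) := by
            rw [hset]; exact measure_iUnion_le _
        _ = ∑ v : Fin n, ((n : ℝ≥0∞)⁻¹ * (n : ℝ≥0∞)⁻¹) := by
            rw [tsum_fintype]; exact Finset.sum_congr rfl fun v _ => heach v
        _ = (n : ℝ≥0∞)⁻¹ := by
            rw [Finset.sum_const, Finset.card_univ, Fintype.card_fin, nsmul_eq_mul,
              ← mul_assoc, ENNReal.mul_inv_cancel (by exact_mod_cast hn.ne')
                (ENNReal.natCast_ne_top n), one_mul]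
    have hbadi : ∀ i : Fin k, P {ω : Fin k → Fin n × S | x (ω i).1 ≠ (ω i).2}
        ≤ ENNReal.ofReal (TT μ n x) := by
      intro i
      have h : {ω : Fin k → Fin n × S | x (ω i).1 ≠ (ω i).2}
          = (fun ω : Fin k → Fin n × S => ω i) ⁻¹' {p : Fin n × S | x p.1 ≠ p.2} := rfl
      rw [hP, h, my_pi_eval_preimage]
      exact gam_bad μ n x hn
    have main : ∀ E : Set (Fin k → Fin n × S),
        E = {ω : Fin k → Fin n × S | Function.Injective (fun i => (ω i).1)
            ∧ ∀ i : Fin k, x ((ω i).1) = (ω i).2} →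
        1 - (k : ℝ) * ((k : ℝ) / n + Sabs) ≤ (P E).toReal := by
      intro E hE
      set U1 : Set (Fin k → Fin n × S) := ⋃ pr : Fin k × Fin k, ⋃ _ : pr.1 ≠ pr.2,
        {ω : Fin k → Fin n × S | (ω pr.1).1 = (ω pr.2).1} with hU1
      set U2 : Set (Fin k → Fin n × S) := ⋃ i : Fin k,
        {ω : Fin k → Fin n × S | x (ω i).1 ≠ (ω i).2} with hU2
      have hsub : Eᶜ ⊆ U1 ∪ U2 := by
        intro ω hω
        rw [hE] at hω
        simp only [Set.mem_compl_iff, Set.mem_setOf_eq, not_and_or] at hω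
        rcases hω with h | h
        · left
          rw [Function.not_injective_iff] at h
          obtain ⟨a, b, hab, hne⟩ := h
          exact Set.mem_iUnion.2 ⟨(a, b), Set.mem_iUnion.2 ⟨hne, hab⟩⟩
        · right
          push_neg at h
          obtain ⟨i, hi⟩ := h
          exact Set.mem_iUnion.2 ⟨i, hi⟩
      have hU1le : P U1 ≤ ((k * k : ℕ) : ℝ≥0∞) * (n : ℝ≥0∞)⁻¹ := by
        calc P U1 ≤ ∑' pr : Fin k × Fin k, P (⋃ _ : pr.1 ≠ pr.2,
            {ω : Fin k → Fin n × S | (ω pr.1).1 = (ω pr.2).1}) := measure_iUnion_le _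
          _ ≤ ∑ pr : Fin k × Fin k, (n : ℝ≥0∞)⁻¹ := by
              rw [tsum_fintype]
              refine Finset.sum_le_sum fun pr _ => ?_
              by_cases hc : pr.1 = pr.2
              · have he : (⋃ _ : pr.1 ≠ pr.2,
                    {ω : Fin k → Fin n × S | (ω pr.1).1 = (ω pr.2).1}) = (∅ : Set _) := by
                  ext ω; simp [hc]
                rw [he]
                simp
              · have he : (⋃ _ : pr.1 ≠ pr.2,
                    {ω : Fin k → Fin n × S | (ω pr.1).1 = (ω pr.2).1})
                    = {ω : Fin k → Fin n × S | (ω pr.1).1 = (ω pr.2).1} := by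
                  ext ω; simp [hc]
                rw [he]
                exact hpair pr hc
          _ = ((k * k : ℕ) : ℝ≥0∞) * (n : ℝ≥0∞)⁻¹ := by
              rw [Finset.sum_const, Finset.card_univ, Fintype.card_prod, Fintype.card_fin,
                nsmul_eq_mul]
      have hU2le : P U2 ≤ ((k : ℕ) : ℝ≥0∞) * ENNReal.ofReal (TT μ n x) := by
        calc P U2 ≤ ∑' i : Fin k, P {ω : Fin k → Fin n × S | x (ω i).1 ≠ (ω i).2} :=
            measure_iUnion_le _
          _ ≤ ∑ i : Fin k, ENNReal.ofReal (TT μ n x) := by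
              rw [tsum_fintype]
              exact Finset.sum_le_sum fun i _ => hbadi i
          _ = ((k : ℕ) : ℝ≥0∞) * ENNReal.ofReal (TT μ n x) := by
              rw [Finset.sum_const, Finset.card_univ, Fintype.card_fin, nsmul_eq_mul]
      have hconv1 : ((k * k : ℕ) : ℝ≥0∞) * (n : ℝ≥0∞)⁻¹
          = ENNReal.ofReal ((k : ℝ) * (k : ℝ) / n) := by
        rw [ENNReal.ofReal_div_of_pos hn',
          show ((k : ℝ) * (k : ℝ)) = ((k * k : ℕ) : ℝ) by push_cast; ring,
          ENNReal.ofReal_natCast, ENNReal.ofReal_natCast, div_eq_mul_inv]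
      have hconv2 : ((k : ℕ) : ℝ≥0∞) * ENNReal.ofReal (TT μ n x)
          = ENNReal.ofReal ((k : ℝ) * TT μ n x) := by
        rw [ENNReal.ofReal_mul (by positivity), ENNReal.ofReal_natCast]
      have hEc : P Eᶜ ≤ ENNReal.ofReal ((k : ℝ) * ((k : ℝ) / n + Sabs)) := by
        calc P Eᶜ ≤ P (U1 ∪ U2) := measure_mono hsub
          _ ≤ P U1 + P U2 := measure_union_le _ _
          _ ≤ ENNReal.ofReal ((k : ℝ) * (k : ℝ) / n) + ENNReal.ofReal ((k : ℝ) * TT μ n x) := by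
              rw [← hconv1, ← hconv2]
              exact add_le_add hU1le hU2le
          _ = ENNReal.ofReal ((k : ℝ) * (k : ℝ) / n + (k : ℝ) * TT μ n x) := by
              rw [ENNReal.ofReal_add (by positivity) (by positivity)]
          _ ≤ ENNReal.ofReal ((k : ℝ) * ((k : ℝ) / n + Sabs)) := by
              refine ENNReal.ofReal_le_ofReal ?_
              have hk0 : (0:ℝ) ≤ (k : ℝ) := by positivity
              have h1 := mul_le_mul_of_nonneg_left hTle hk0
              have h2 : (k:ℝ) * ((k:ℝ)/n + Sabs) = (k:ℝ)*(k:ℝ)/n + (k:ℝ)*Sabs := by ring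
              linarith
      have hEcR : (P Eᶜ).toReal ≤ (k : ℝ) * ((k : ℝ) / n + Sabs) :=
        ENNReal.toReal_le_of_le_ofReal (by positivity) hEc
      have hadd : P E + P Eᶜ = 1 := by
        rw [measure_add_measure_compl (measAll E), measure_univ]
      have haddR : (P E).toReal + (P Eᶜ).toReal = 1 := by
        have h := congrArg ENNReal.toReal hadd
        rwa [ENNReal.toReal_add (measure_ne_top P E) (measure_ne_top P Eᶜ),
          ENNReal.toReal_one] at h
      linarith
    exact main _ rfl
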